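/- Let d ≥ 1, t ≥ 1 be integers and c > 0. For τ = 1, …, t, let z_τ, ε_τ ∈ ℝᵈ, y_τ ∈ ℝ, and E_τ a real d×d matrix; set x_τ = z_τ + ε_τ, Z = Σ_τ (x_τ x_τᵀ − E_τ), Y = Σ_τ y_τ x_τ, N₁ = Σ_τ z_τ ε_τᵀ, N₂ = Σ_τ (ε_τ ε_τᵀ − E_τ), N₃ = Σ_τ (y_τ − z_τᵀθ) x_τ, where θ ∈ ℝᵈ satisfies ‖θ‖₂ ≤ 1. Suppose Z = U Λ Uᵀ with U orthogonal and Λ diagonal, and let S ⊆ {1, …, d} be such that Λᵢᵢ ≥ c for all i ∈ S; let U_S and Λ_S be the corresponding column and diagonal submatrices. Then ‖U_S Λ_S⁻¹ U_Sᵀ (Y − Zθ)‖₂ ≤ c⁻¹ (‖N₁‖₂ + ‖N₂‖₂ + ‖N₃‖₂). -/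

import Mathlib

open Matrix

/-- The spectral norm (ℓ₂→ℓ₂ operator norm, i.e. largest singular value) of a real matrix. -/
noncomputable def specNorm {m n : Type*} [Fintype m] [Fintype n] [DecidableEq n]
    (A : Matrix m n ℝ) : ℝ :=
  ‖LinearMap.toContinuousLinearMap (Matrix.toEuclideanLin A)‖

/-- The Euclidean norm of a vector in `ℝᵈ`. -/
noncomputable def evNorm {n : Type*} [Fintype n] (v : n → ℝ) : ℝ :=
  Real.sqrt (∑ i, v i ^ 2)

lemma evNorm_eq {n : Type*} [Fintype n] (v : n → ℝ) :
    evNorm v = ‖(WithLp.equiv 2 (n → ℝ)).symm v‖ := by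
  rw [EuclideanSpace.norm_eq, evNorm]
  congr 1
  refine Finset.sum_congr rfl fun i _ => ?_
  rw [Real.norm_eq_abs, sq_abs]; rfl

lemma evNorm_nonneg {n : Type*} [Fintype n] (v : n → ℝ) : 0 ≤ evNorm v :=
  Real.sqrt_nonneg _

lemma evNorm_sq {n : Type*} [Fintype n] (v : n → ℝ) : evNorm v ^ 2 = v ⬝ᵥ v := by
  rw [evNorm, Real.sq_sqrt]
  · simp [dotProduct, sq]
  · positivity

lemma evNorm_add_le {n : Type*} [Fintype n] (a b : n → ℝ) :
    evNorm (a + b) ≤ evNorm a + evNorm b := by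
  simp only [evNorm_eq]
  exact norm_add_le ((WithLp.equiv 2 (n → ℝ)).symm a) ((WithLp.equiv 2 (n → ℝ)).symm b)

lemma evNorm_neg {n : Type*} [Fintype n] (a : n → ℝ) : evNorm (-a) = evNorm a := by
  simp only [evNorm_eq]
  exact norm_neg ((WithLp.equiv 2 (n → ℝ)).symm a)

lemma dotProduct_le {n : Type*} [Fintype n] (a b : n → ℝ) :
    a ⬝ᵥ b ≤ evNorm a * evNorm b := by
  simp only [evNorm_eq]
  have := real_inner_le_norm ((WithLp.equiv 2 (n → ℝ)).symm a) ((WithLp.equiv 2 (n → ℝ)).symm b)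
  rw [PiLp.inner_apply] at this
  simpa [dotProduct, RCLike.inner_apply, mul_comm] using this

lemma evNorm_mulVec_le {m n : Type*} [Fintype m] [Fintype n] [DecidableEq n]
    (A : Matrix m n ℝ) (v : n → ℝ) :
    evNorm (A *ᵥ v) ≤ specNorm A * evNorm v := by
  rw [evNorm_eq, evNorm_eq]
  exact (LinearMap.toContinuousLinearMap (Matrix.toEuclideanLin A)).le_opNorm ((WithLp.equiv 2 (n → ℝ)).symm v)

lemma specNorm_nonneg {m n : Type*} [Fintype m] [Fintype n] [DecidableEq n]
    (A : Matrix m n ℝ) : 0 ≤ specNorm A := norm_nonneg _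

lemma sum_mulVec' {m n ι : Type*} [Fintype m] [Fintype n] [Fintype ι]
    (M : ι → Matrix m n ℝ) (v : n → ℝ) :
    (∑ τ, M τ) *ᵥ v = ∑ τ, M τ *ᵥ v := by
  ext i
  simp only [mulVec, dotProduct, Finset.sum_apply, Matrix.sum_apply, Finset.sum_mul]
  rw [Finset.sum_comm]

lemma vecMulVec_mulVec' {m n : Type*} [Fintype n] (a : m → ℝ) (b v : n → ℝ) :
    Matrix.vecMulVec a b *ᵥ v = (b ⬝ᵥ v) • a := by
  ext i
  simp only [mulVec, dotProduct, Matrix.vecMulVec_apply, Pi.smul_apply, smul_eq_mul,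
    Finset.sum_mul, Finset.mul_sum]
  exact Finset.sum_congr rfl fun j _ => by ring

/-- Isometry for matrices with orthonormal columns. -/
lemma evNorm_isometry {m n : Type*} [Fintype m] [Fintype n] [DecidableEq n]
    (A : Matrix m n ℝ) (hA : Aᵀ * A = 1) (b : n → ℝ) :
    evNorm (A *ᵥ b) = evNorm b := by
  have h : (A *ᵥ b) ⬝ᵥ (A *ᵥ b) = b ⬝ᵥ b := by
    rw [Matrix.dotProduct_mulVec, ← Matrix.mulVec_transpose, Matrix.mulVec_mulVec, hA,
      Matrix.one_mulVec]
  have := congrArg Real.sqrt ((evNorm_sq (A *ᵥ b)).trans (h.trans (evNorm_sq b).symm))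
  rwa [Real.sqrt_sq (evNorm_nonneg _), Real.sqrt_sq (evNorm_nonneg _)] at this

lemma evNorm_transpose_mulVec_le {m n : Type*} [Fintype m] [Fintype n] [DecidableEq n]
    (A : Matrix m n ℝ) (hA : Aᵀ * A = 1) (w : m → ℝ) :
    evNorm (Aᵀ *ᵥ w) ≤ evNorm w := by
  set p := Aᵀ *ᵥ w with hp
  have h1 : evNorm p ^ 2 ≤ evNorm p * evNorm w := by
    rw [evNorm_sq]
    calc p ⬝ᵥ p = (A *ᵥ p) ⬝ᵥ w := by
          rw [hp, dotProduct_comm, Matrix.dotProduct_mulVec, ← Matrix.mulVec_transpose,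
            Matrix.transpose_transpose, dotProduct_comm]
      _ ≤ evNorm (A *ᵥ p) * evNorm w := dotProduct_le _ _
      _ = evNorm p * evNorm w := by rw [evNorm_isometry A hA]
  rcases eq_or_lt_of_le (evNorm_nonneg p) with h0 | h0
  · rw [← h0]; exact evNorm_nonneg w
  · have := h1
    rw [sq] at this
    exact le_of_mul_le_mul_left this h0

/-- eq. (eq:UDUs) of the paper. With the NLinRel statistics
`Z = Σ_τ (x_τ x_τᵀ − E_τ)`, `Y = Σ_τ y_τ x_τ` (where `x_τ = z_τ + ε_τ`), the noise martingales
`N₁ = Σ_τ z_τ ε_τᵀ`, `N₂ = Σ_τ (ε_τ ε_τᵀ − E_τ)`, `N₃ = Σ_τ (y_τ − z_τᵀθ) x_τ`, `‖θ‖₂ ≤ 1`,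
and an eigendecomposition `Z = U Λ Uᵀ` whose eigenvalues indexed by `S` are at least `c > 0`,
one has `‖U_S Λ_S⁻¹ U_Sᵀ (Y − Zθ)‖₂ ≤ c⁻¹ (‖N₁‖₂ + ‖N₂‖₂ + ‖N₃‖₂)`. -/
theorem stmt_7 {d t : ℕ} (hd : 1 ≤ d) (ht : 1 ≤ t) (c : ℝ) (hc : 0 < c)
    (z ε : Fin t → Fin d → ℝ) (y : Fin t → ℝ) (E : Fin t → Matrix (Fin d) (Fin d) ℝ)
    (θ : Fin d → ℝ) (hθ : evNorm θ ≤ 1)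
    (x : Fin t → Fin d → ℝ) (hx : ∀ τ, x τ = z τ + ε τ)
    (Z : Matrix (Fin d) (Fin d) ℝ)
    (hZ : Z = ∑ τ, (Matrix.vecMulVec (x τ) (x τ) - E τ))
    (Y : Fin d → ℝ) (hY : Y = ∑ τ, y τ • x τ)
    (N₁ : Matrix (Fin d) (Fin d) ℝ)
    (hN₁ : N₁ = ∑ τ, Matrix.vecMulVec (z τ) (ε τ))
    (N₂ : Matrix (Fin d) (Fin d) ℝ)
    (hN₂ : N₂ = ∑ τ, (Matrix.vecMulVec (ε τ) (ε τ) - E τ))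
    (N₃ : Fin d → ℝ) (hN₃ : N₃ = ∑ τ, (y τ - z τ ⬝ᵥ θ) • x τ)
    (U Λ : Matrix (Fin d) (Fin d) ℝ) (lam : Fin d → ℝ)
    (hΛ : Λ = Matrix.diagonal lam)
    (hU : Uᵀ * U = 1) (hZdec : Z = U * Λ * Uᵀ)
    (S : Finset (Fin d)) (hS : ∀ i ∈ S, c ≤ lam i)
    (US : Matrix (Fin d) S ℝ) (hUS : US = U.submatrix id (fun i : S => (i : Fin d)))
    (ΛS : Matrix S S ℝ) (hΛS : ΛS = Matrix.diagonal (fun i : S => lam i)) :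
    evNorm ((US * ΛS⁻¹ * USᵀ) *ᵥ (Y - Z *ᵥ θ)) ≤
      c⁻¹ * (specNorm N₁ + specNorm N₂ + evNorm N₃) := by
  -- orthonormal columns of US
  have hUSo : USᵀ * US = 1 := by
    subst hUS
    ext i j
    have := congrFun (congrFun hU (i : Fin d)) (j : Fin d)
    simp only [Matrix.mul_apply, Matrix.transpose_apply, Matrix.submatrix_apply, id] at this ⊢
    rw [this]
    by_cases h : i = j
    · subst h; simp
    · rw [Matrix.one_apply_ne (fun hh => h (Subtype.ext hh)), Matrix.one_apply_ne h]
  -- inverse of ΛS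
  have hlamne : ∀ i : S, lam i ≠ 0 := fun i => ne_of_gt (lt_of_lt_of_le hc (hS i i.2))
  have hΛSinv : ΛS⁻¹ = Matrix.diagonal (fun i : S => (lam i)⁻¹) := by
    rw [hΛS]
    apply Matrix.inv_eq_right_inv
    rw [Matrix.diagonal_mul_diagonal,
      show (fun i : S => lam i * (lam i)⁻¹) = fun _ => 1 from
        funext fun i => mul_inv_cancel₀ (hlamne i), Matrix.diagonal_one]
  -- key algebraic identity
  have key : Y - Z *ᵥ θ = N₃ - N₁ *ᵥ θ - N₂ *ᵥ θ := by
    subst hZ hY hN₁ hN₂ hN₃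
    simp only [sum_mulVec', Matrix.sub_mulVec, vecMulVec_mulVec']
    rw [← Finset.sum_sub_distrib, ← Finset.sum_sub_distrib, ← Finset.sum_sub_distrib]
    refine Finset.sum_congr rfl fun τ _ => ?_
    rw [hx τ, add_dotProduct]
    module
  rw [key]
  -- bound the projection factor
  set w : Fin d → ℝ := N₃ - N₁ *ᵥ θ - N₂ *ᵥ θ with hw
  have hproj : evNorm ((US * ΛS⁻¹ * USᵀ) *ᵥ w) ≤ c⁻¹ * evNorm w := by
    rw [show (US * ΛS⁻¹ * USᵀ) *ᵥ w = US *ᵥ (ΛS⁻¹ *ᵥ (USᵀ *ᵥ w)) by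
      rw [Matrix.mulVec_mulVec, Matrix.mulVec_mulVec]]
    rw [evNorm_isometry US hUSo]
    set a := USᵀ *ᵥ w with ha
    have hdiag : evNorm (ΛS⁻¹ *ᵥ a) ≤ c⁻¹ * evNorm a := by
      rw [hΛSinv, evNorm, evNorm]
      rw [show c⁻¹ * Real.sqrt (∑ i, a i ^ 2) = Real.sqrt ((c⁻¹)^2 * ∑ i, a i ^ 2) by
        rw [Real.sqrt_mul (by positivity), Real.sqrt_sq (by positivity)]]
      apply Real.sqrt_le_sqrt
      rw [Finset.mul_sum]
      refine Finset.sum_le_sum fun i _ => ?_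
      rw [Matrix.mulVec_diagonal, mul_pow]
      have h1 : (lam i)⁻¹ ≤ c⁻¹ := inv_anti₀ hc (hS i i.2)
      have h2 : 0 ≤ (lam i)⁻¹ := inv_nonneg.mpr (le_of_lt (lt_of_lt_of_le hc (hS i i.2)))
      have : ((lam i : ℝ))⁻¹ ^ 2 ≤ (c⁻¹) ^ 2 := pow_le_pow_left₀ h2 h1 2
      exact mul_le_mul_of_nonneg_right this (sq_nonneg _)
    calc evNorm (ΛS⁻¹ *ᵥ a) ≤ c⁻¹ * evNorm a := hdiag
      _ ≤ c⁻¹ * evNorm w := by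
          exact mul_le_mul_of_nonneg_left (evNorm_transpose_mulVec_le US hUSo w)
            (inv_nonneg.mpr (le_of_lt hc))
  refine hproj.trans ?_
  apply mul_le_mul_of_nonneg_left _ (inv_nonneg.mpr (le_of_lt hc))
  -- bound evNorm w
  have hw1 : evNorm w ≤ evNorm N₃ + evNorm (N₁ *ᵥ θ) + evNorm (N₂ *ᵥ θ) := by
    calc evNorm w = evNorm (N₃ + (-(N₁ *ᵥ θ)) + (-(N₂ *ᵥ θ))) := by
          rw [hw, sub_eq_add_neg, sub_eq_add_neg]
      _ ≤ evNorm (N₃ + (-(N₁ *ᵥ θ))) + evNorm (-(N₂ *ᵥ θ)) := evNorm_add_le _ _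
      _ ≤ evNorm N₃ + evNorm (-(N₁ *ᵥ θ)) + evNorm (-(N₂ *ᵥ θ)) :=
          by linarith [evNorm_add_le N₃ (-(N₁ *ᵥ θ))]
      _ = evNorm N₃ + evNorm (N₁ *ᵥ θ) + evNorm (N₂ *ᵥ θ) := by
          simp only [evNorm_neg]
  refine hw1.trans ?_
  have b1 : evNorm (N₁ *ᵥ θ) ≤ specNorm N₁ :=
    (evNorm_mulVec_le N₁ θ).trans (by
      nlinarith [specNorm_nonneg N₁, evNorm_nonneg θ])
  have b2 : evNorm (N₂ *ᵥ θ) ≤ specNorm N₂ :=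
    (evNorm_mulVec_le N₂ θ).trans (by
      nlinarith [specNorm_nonneg N₂, evNorm_nonneg θ])
  linarith
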